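/- Delta of the barrier-pricing parameter 𝒜: fix K > 0, T > 0, σ > 0, r_d, r_f ∈ ℝ and φ ∈ {1, −1}. Then the function S ↦ 𝒜(S) = φ(S e^{-r_f T} N(φx₁(S)) − K e^{-r_d T} N(φ(x₁(S) − σ√T))), where x₁(S) = ln(S/K)/(σ√T) + (1+α)σ√T and α = (r_d − r_f − σ²/2)/σ², is differentiable at every S > 0 with derivative ∂𝒜/∂S = (φ/2) e^{-r_f T} (erf(φ(2 ln(S/K) + T(2r_d − 2r_f + σ²))/(2√2 σ√T)) + 1). -/

import Mathlib

open Real MeasureTheory Set intervalIntegral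

noncomputable def stdNormalCdf (z : ℝ) : ℝ :=
  ∫ x in Set.Iic z, (1 / Real.sqrt (2 * Real.pi)) * Real.exp (-x ^ 2 / 2)

/-- The error function `erf z = (2/√π) ∫_0^z e^{-t²} dt`. -/
noncomputable def erf (z : ℝ) : ℝ :=
  (2 / Real.sqrt Real.pi) * ∫ t in (0:ℝ)..z, Real.exp (-t ^ 2)

lemma gauss_integrable : Integrable (fun x : ℝ => Real.exp (-x ^ 2 / 2)) := by
  have := integrable_exp_neg_mul_sq (b := (1/2 : ℝ)) (by norm_num)
  convert this using 2 with x
  ring_nf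

lemma total_gauss : (∫ x : ℝ, Real.exp (-x ^ 2 / 2)) = Real.sqrt (2 * Real.pi) := by
  have := integral_gaussian (1/2 : ℝ)
  rw [show Real.pi / (1/2) = 2 * Real.pi by ring] at this
  rw [← this]
  congr 1 with x
  ring_nf

lemma iic_zero_gauss : (∫ x in Iic (0:ℝ), Real.exp (-x ^ 2 / 2)) = Real.sqrt (2 * Real.pi) / 2 := by
  have hsym : (∫ x in Iic (0:ℝ), Real.exp (-x ^ 2 / 2)) = ∫ x in Ioi (0:ℝ), Real.exp (-x ^ 2 / 2) := by
    have := integral_comp_neg_Iic (0:ℝ) (fun x => Real.exp (-x ^ 2 / 2))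
    simp only [neg_zero] at this
    rw [← this]
    congr 1 with x
    ring_nf
  have hsplit := integral_Iic_add_Ioi (b := (0:ℝ)) (μ := volume)
    (gauss_integrable.integrableOn) (gauss_integrable.integrableOn)
  rw [total_gauss] at hsplit
  linarith [hsplit, hsym]

lemma cdf_zero : stdNormalCdf 0 = 1/2 := by
  unfold stdNormalCdf
  rw [MeasureTheory.integral_const_mul, iic_zero_gauss]
  rw [one_div]
  field_simp

lemma cdf_sub (z : ℝ) : stdNormalCdf z - stdNormalCdf 0 =
    ∫ x in (0:ℝ)..z, (1 / Real.sqrt (2 * Real.pi)) * Real.exp (-x ^ 2 / 2) := by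
  have hi : Integrable (fun x : ℝ => (1 / Real.sqrt (2 * Real.pi)) * Real.exp (-x ^ 2 / 2)) :=
    gauss_integrable.const_mul _
  unfold stdNormalCdf
  rw [← integral_Iic_sub_Iic hi.integrableOn hi.integrableOn]

lemma cdf_hasDerivAt (z : ℝ) :
    HasDerivAt stdNormalCdf ((1 / Real.sqrt (2 * Real.pi)) * Real.exp (-z ^ 2 / 2)) z := by
  have hc : Continuous (fun x : ℝ => (1 / Real.sqrt (2 * Real.pi)) * Real.exp (-x ^ 2 / 2)) := by
    fun_prop
  have h := (hc.integral_hasStrictDerivAt 0 z).hasDerivAt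
  have h2 := h.add_const (stdNormalCdf 0)
  have : (fun u => (∫ x in (0:ℝ)..u, (1 / Real.sqrt (2 * Real.pi)) * Real.exp (-x ^ 2 / 2))
      + stdNormalCdf 0) = stdNormalCdf := by
    funext u
    rw [← cdf_sub u]; ring
  rwa [this] at h2

lemma cdf_erf (z : ℝ) : stdNormalCdf z = (erf (z / Real.sqrt 2) + 1) / 2 := by
  have h2 : Real.sqrt 2 ≠ 0 := by positivity
  have hsub : (∫ x in (0:ℝ)..z, Real.exp (-x ^ 2 / 2))
      = Real.sqrt 2 * ∫ t in (0:ℝ)..(z / Real.sqrt 2), Real.exp (-t ^ 2) := by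
    have := intervalIntegral.integral_comp_div (a := (0:ℝ)) (b := z)
      (f := fun t => Real.exp (-t ^ 2)) (c := Real.sqrt 2) h2
    simp only [zero_div, smul_eq_mul] at this
    rw [← this]
    congr 1 with x
    rw [div_pow, Real.sq_sqrt (by norm_num : (0:ℝ) ≤ 2)]
    ring_nf
  have key : stdNormalCdf z - stdNormalCdf 0 = erf (z / Real.sqrt 2) / 2 := by
    rw [cdf_sub, intervalIntegral.integral_const_mul, hsub, erf]
    have hsp : Real.sqrt (2 * Real.pi) = Real.sqrt 2 * Real.sqrt Real.pi :=
      Real.sqrt_mul (by norm_num) _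
    have hp : Real.sqrt Real.pi ≠ 0 := by positivity
    rw [hsp]
    field_simp
  rw [cdf_zero] at key
  linarith

/-- Delta of the barrier-pricing parameter `𝒜`. -/
theorem delta_A (K T σ rd rf φ : ℝ) (hK : 0 < K) (hT : 0 < T) (hσ : 0 < σ)
    (hφ : φ = 1 ∨ φ = -1) (S : ℝ) (hS : 0 < S) :
    HasDerivAt (fun s : ℝ =>
        φ * (s * Real.exp (-rf * T) *
            stdNormalCdf (φ * (Real.log (s / K) / (σ * Real.sqrt T) +
              (1 + (rd - rf - σ ^ 2 / 2) / σ ^ 2) * (σ * Real.sqrt T))) -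
          K * Real.exp (-rd * T) *
            stdNormalCdf (φ * (Real.log (s / K) / (σ * Real.sqrt T) +
              (1 + (rd - rf - σ ^ 2 / 2) / σ ^ 2) * (σ * Real.sqrt T) - σ * Real.sqrt T))))
      (φ / 2 * Real.exp (-rf * T) *
        (erf (φ * (2 * Real.log (S / K) + T * (2 * rd - 2 * rf + σ ^ 2)) /
            (2 * Real.sqrt 2 * σ * Real.sqrt T)) + 1)) S := by
  set t := Real.sqrt T with ht_def
  have ht : 0 < t := Real.sqrt_pos.mpr hT
  have ht2 : t ^ 2 = T := Real.sq_sqrt hT.le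
  have hw : (0:ℝ) < σ * t := by positivity
  set c := (1 + (rd - rf - σ ^ 2 / 2) / σ ^ 2) * (σ * t) with hc_def
  set x₁ := Real.log (S / K) / (σ * t) + c with hx1_def
  -- derivative of x₁
  have hdiv : HasDerivAt (fun s : ℝ => s / K) (1 / K) S := by
    simpa using (hasDerivAt_id S).div_const K
  have hSK : S / K ≠ 0 := by positivity
  have hlog : HasDerivAt (fun s : ℝ => Real.log (s / K)) ((S / K)⁻¹ * (1 / K)) S :=
    by have := (Real.hasDerivAt_log hSK).comp S hdiv; exact this
  set d := (S / K)⁻¹ * (1 / K) / (σ * t) with hd_def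
  have hx1 : HasDerivAt (fun s : ℝ => Real.log (s / K) / (σ * t) + c) d S :=
    (hlog.div_const (σ * t)).add_const c
  have hu : HasDerivAt (fun s : ℝ => φ * (Real.log (s / K) / (σ * t) + c)) (φ * d) S :=
    hx1.const_mul φ
  have hv : HasDerivAt (fun s : ℝ => φ * (Real.log (s / K) / (σ * t) + c - σ * t))
      (φ * d) S := (hx1.sub_const (σ * t)).const_mul φ
  have hNu : HasDerivAt (fun s : ℝ => stdNormalCdf (φ * (Real.log (s / K) / (σ * t) + c)))
      ((1 / Real.sqrt (2 * Real.pi)) * Real.exp (-(φ * x₁) ^ 2 / 2) * (φ * d)) S :=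
    by have := (cdf_hasDerivAt (φ * x₁)).comp S hu; exact this
  have hNv : HasDerivAt
      (fun s : ℝ => stdNormalCdf (φ * (Real.log (s / K) / (σ * t) + c - σ * t)))
      ((1 / Real.sqrt (2 * Real.pi)) * Real.exp (-(φ * (x₁ - σ * t)) ^ 2 / 2) * (φ * d)) S :=
    by have := (cdf_hasDerivAt (φ * (x₁ - σ * t))).comp S hv; exact this
  have hA : HasDerivAt
      (fun s : ℝ => s * Real.exp (-rf * T) *
        stdNormalCdf (φ * (Real.log (s / K) / (σ * t) + c)))
      (1 * Real.exp (-rf * T) * stdNormalCdf (φ * x₁) +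
        S * Real.exp (-rf * T) *
          ((1 / Real.sqrt (2 * Real.pi)) * Real.exp (-(φ * x₁) ^ 2 / 2) * (φ * d))) S :=
    ((hasDerivAt_id S).mul_const (Real.exp (-rf * T))).mul hNu
  have hB : HasDerivAt
      (fun s : ℝ => K * Real.exp (-rd * T) *
        stdNormalCdf (φ * (Real.log (s / K) / (σ * t) + c - σ * t)))
      (K * Real.exp (-rd * T) *
        ((1 / Real.sqrt (2 * Real.pi)) * Real.exp (-(φ * (x₁ - σ * t)) ^ 2 / 2) * (φ * d))) S := by
    simpa [mul_assoc] using hNv.const_mul (K * Real.exp (-rd * T))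
  have hF := (hA.sub hB).const_mul φ
  convert hF using 1
  case e'_4 => rfl
  case e'_5 => rfl
  case e'_8 => rfl
  -- now the algebraic identity for the derivative value
  have hφ2 : φ ^ 2 = 1 := by rcases hφ with h | h <;> rw [h] <;> norm_num
  have hsq1 : (φ * x₁) ^ 2 = x₁ ^ 2 := by rw [mul_pow, hφ2, one_mul]
  have hsq2 : (φ * (x₁ - σ * t)) ^ 2 = (x₁ - σ * t) ^ 2 := by rw [mul_pow, hφ2, one_mul]
  have hL : Real.log (S / K) = Real.log S - Real.log K := Real.log_div hS.ne' hK.ne'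
  have hexp : x₁ * (σ * t) - (σ * t) ^ 2 / 2 = Real.log (S / K) + (rd - rf) * T := by
    rw [hx1_def, hc_def, ← ht2]
    field_simp
    ring
  have hcancel : S * Real.exp (-rf * T) * Real.exp (-x₁ ^ 2 / 2)
      = K * Real.exp (-rd * T) * Real.exp (-(x₁ - σ * t) ^ 2 / 2) := by
    rw [← Real.exp_log hS, ← Real.exp_log hK, ← Real.exp_add, ← Real.exp_add,
      ← Real.exp_add, ← Real.exp_add, Real.exp_eq_exp]
    nlinarith [hexp, hL]
  have harg : φ * x₁ / Real.sqrt 2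
      = φ * (2 * Real.log (S / K) + T * (2 * rd - 2 * rf + σ ^ 2)) / (2 * Real.sqrt 2 * σ * t) := by
    have h2 : Real.sqrt 2 ≠ 0 := by positivity
    rw [hx1_def, hc_def, ← ht2]
    field_simp
    ring
  have h0 : S * Real.exp (-rf * T) *
        ((1 / Real.sqrt (2 * Real.pi)) * Real.exp (-x₁ ^ 2 / 2) * (φ * d))
      = K * Real.exp (-rd * T) *
        ((1 / Real.sqrt (2 * Real.pi)) * Real.exp (-(x₁ - σ * t) ^ 2 / 2) * (φ * d)) := by
    linear_combination ((1 / Real.sqrt (2 * Real.pi)) * (φ * d)) * hcancel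
  rw [hsq1, hsq2, cdf_erf (φ * x₁), harg]
  linear_combination φ * h0 - (2 * φ ^ 2 * (Real.sqrt (2 * Real.pi))⁻¹ * K⁻¹ * S⁻¹ *
    (K⁻¹)⁻¹ * σ⁻¹ * t⁻¹) * hcancel
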